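/- The function H is twice continuously differentiable on ℝ, with H''(x) = -λ x⁻³ f(-1/x) for x < 0 and H''(x) = 0 for x ≥ 0; in particular H''(x) → 0 as x → 0⁻. -/

import Mathlib

open MeasureTheory Filter Set

/-- The function `H` is twice continuously differentiable on `ℝ`, with
`H''(x) = -λ x⁻³ f(-1/x)` for `x < 0` and `H''(x) = 0` for `x ≥ 0`;
in particular `H''(x) → 0` as `x → 0⁻`. -/
theorem stmt_3 (f F G H : ℝ → ℝ) (mbar lam : ℝ)
    (hf_cont : Continuous f)
    (hf_nonpos : ∀ p ≤ (0 : ℝ), f p = 0)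
    (hf_pos : ∀ p : ℝ, 0 < p → 0 < f p)
    (hf_int : (∫ p in Set.Ioi (0 : ℝ), f p) = 1)
    (hf_tail : Filter.Tendsto (fun p : ℝ => p ^ 3 * f p) Filter.atTop (nhds 0))
    (hmean_int : MeasureTheory.IntegrableOn (fun p : ℝ => p * f p) (Set.Ioi 0))
    (hmbar : mbar = ∫ p in Set.Ioi (0 : ℝ), p * f p)
    (hF : ∀ b : ℝ, F b = ∫ p in (0 : ℝ)..b, f p)
    (hG : ∀ b : ℝ, G b = ∫ p in (0 : ℝ)..b, p * f p)
    (hlam : 0 < lam)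
    (hHneg : ∀ x < (0 : ℝ), H x = -(lam * x) * ∫ p in (0 : ℝ)..(-1 / x), F p)
    (hHpos : ∀ x : ℝ, 0 ≤ x → H x = lam * (1 + x * mbar)) :
    ∃ H' H'' : ℝ → ℝ, Continuous H' ∧ Continuous H'' ∧
      (∀ x : ℝ, HasDerivAt H (H' x) x) ∧
      (∀ x : ℝ, HasDerivAt H' (H'' x) x) ∧
      (∀ x < (0 : ℝ), H'' x = -lam * (x ^ 3)⁻¹ * f (-1 / x)) ∧
      (∀ x : ℝ, 0 ≤ x → H'' x = 0) ∧
      Filter.Tendsto H'' (nhdsWithin 0 (Set.Iio 0)) (nhds 0) := by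
  have hg_cont : Continuous (fun p : ℝ => p * f p) := continuous_id.mul hf_cont
  -- F, G as functions
  have hFfun : F = fun b => ∫ p in (0:ℝ)..b, f p := funext hF
  have hGfun : G = fun b => ∫ p in (0:ℝ)..b, p * f p := funext hG
  -- derivatives of F and G
  have hF_deriv : ∀ b : ℝ, HasDerivAt F (f b) b := by
    intro b
    rw [hFfun]
    exact intervalIntegral.integral_hasDerivAt_right
      (hf_cont.intervalIntegrable _ _) (hf_cont.stronglyMeasurableAtFilter _ _)
      hf_cont.continuousAt
  have hG_deriv : ∀ b : ℝ, HasDerivAt G (b * f b) b := by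
    intro b
    rw [hGfun]
    exact intervalIntegral.integral_hasDerivAt_right
      (hg_cont.intervalIntegrable _ _) (hg_cont.stronglyMeasurableAtFilter _ _)
      hg_cont.continuousAt
  have hF_cont : Continuous F := by
    rw [continuous_iff_continuousAt]; exact fun b => (hF_deriv b).continuousAt
  have hG_cont : Continuous G := by
    rw [continuous_iff_continuousAt]; exact fun b => (hG_deriv b).continuousAt
  have hG0 : G 0 = 0 := by simp [hG 0]
  -- integration by parts: ∫₀^b F = b F(b) - G(b)
  have hIBP : ∀ b : ℝ, (∫ p in (0:ℝ)..b, F p) = b * F b - G b := by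
    intro b
    have hderiv : ∀ t ∈ Set.uIcc (0:ℝ) b,
        HasDerivAt (fun y => y * F y - G y) (F t) t := by
      intro t _
      have h1 : HasDerivAt (fun y => y * F y) (1 * F t + t * f t) t :=
        (hasDerivAt_id t).mul (hF_deriv t)
      have h2 : HasDerivAt (fun y => y * F y - G y) (1 * F t + t * f t - t * f t) t :=
        h1.sub (hG_deriv t)
      convert h2 using 1; ring
    have := intervalIntegral.integral_eq_sub_of_hasDerivAt hderiv
      (hF_cont.intervalIntegrable _ _)
    rw [this, hG0]; ring
  -- H on negatives in a nicer form
  have hHneg' : ∀ x < (0:ℝ), H x = lam * F (-1/x) + lam * x * G (-1/x) := by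
    intro x hx
    have hx0 : x ≠ 0 := ne_of_lt hx
    rw [hHneg x hx, hIBP]
    field_simp
    ring
  -- integrability of f on Ioi 0
  have hf_int_Ioi : IntegrableOn f (Set.Ioi (0:ℝ)) := by
    have h1 : IntegrableOn f (Set.Ioc (0:ℝ) 1) := hf_cont.integrableOn_Ioc
    have h2 : IntegrableOn f (Set.Ioi (1:ℝ)) := by
      apply Integrable.mono (hmean_int.mono_set (Set.Ioi_subset_Ioi zero_le_one))
        hf_cont.aestronglyMeasurable.restrict
      filter_upwards [ae_restrict_mem measurableSet_Ioi] with p hp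
      have hp1 : (1:ℝ) < p := hp
      have hfp : 0 ≤ f p := (hf_pos p (by linarith)).le
      rw [Real.norm_eq_abs, Real.norm_eq_abs, abs_of_nonneg hfp,
        abs_of_nonneg (by nlinarith : (0:ℝ) ≤ p * f p)]
      nlinarith
    have := h1.union h2
    rwa [Set.Ioc_union_Ioi_eq_Ioi zero_le_one] at this
  -- limits at infinity
  have hF_lim : Tendsto F atTop (nhds 1) := by
    rw [hFfun, ← hf_int]
    exact intervalIntegral_tendsto_integral_Ioi 0 hf_int_Ioi tendsto_id
  have hG_lim : Tendsto G atTop (nhds mbar) := by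
    rw [hGfun, hmbar]
    exact intervalIntegral_tendsto_integral_Ioi 0 hmean_int tendsto_id
  -- -1/x → ∞ as x → 0⁻
  have hb_lim : Tendsto (fun x : ℝ => -1/x) (nhdsWithin 0 (Set.Iio 0)) atTop := by
    have hneg : Tendsto (fun x : ℝ => -x) (nhdsWithin (0:ℝ) (Set.Iio 0))
        (nhdsWithin (0:ℝ) (Set.Ioi 0)) := by
      apply tendsto_nhdsWithin_of_tendsto_nhds_of_eventually_within
      · simpa using (continuous_neg.tendsto (0:ℝ)).mono_left nhdsWithin_le_nhds
      · filter_upwards [self_mem_nhdsWithin] with x hx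
        exact Set.mem_Ioi.mpr (neg_pos.mpr hx)
    have := tendsto_inv_nhdsGT_zero.comp hneg
    apply this.congr
    intro x
    simp [Function.comp, neg_div, one_div, inv_neg]
  -- candidate derivatives
  set H' : ℝ → ℝ := fun x => if x < 0 then lam * G (-1/x) else lam * mbar with hH'def
  set H'' : ℝ → ℝ := fun x => if x < 0 then -lam * (x^3)⁻¹ * f (-1/x) else 0 with hH''def
  have hH'neg : ∀ x < (0:ℝ), H' x = lam * G (-1/x) := fun x hx => if_pos hx
  have hH'nonneg : ∀ x : ℝ, 0 ≤ x → H' x = lam * mbar := fun x hx => if_neg (not_lt.mpr hx)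
  have hH''neg : ∀ x < (0:ℝ), H'' x = -lam * (x^3)⁻¹ * f (-1/x) := fun x hx => if_pos hx
  have hH''nonneg : ∀ x : ℝ, 0 ≤ x → H'' x = 0 := fun x hx => if_neg (not_lt.mpr hx)
  -- derivative of u = -1/x
  have hu_deriv : ∀ x : ℝ, x ≠ 0 → HasDerivAt (fun y : ℝ => -1/y) ((x^2)⁻¹) x := by
    intro x hx
    simpa [neg_div, one_div] using (hasDerivAt_inv hx).fun_neg
  -- H has derivative H' on negatives
  have hHd_neg : ∀ x < (0:ℝ), HasDerivAt H (H' x) x := by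
    intro x hx
    have hx0 : x ≠ 0 := ne_of_lt hx
    have hu := hu_deriv x hx0
    have hFc : HasDerivAt (fun y : ℝ => F (-1/y)) (f (-1/x) * (x^2)⁻¹) x :=
      (hF_deriv (-1/x)).comp x hu
    have hGc : HasDerivAt (fun y : ℝ => G (-1/y)) ((-1/x) * f (-1/x) * (x^2)⁻¹) x :=
      (hG_deriv (-1/x)).comp x hu
    have hmain : HasDerivAt (fun y : ℝ => lam * F (-1/y) + lam * y * G (-1/y))
        (lam * G (-1/x)) x := by
      have h1 := hFc.const_mul lam
      have h2 := ((hasDerivAt_id' (x := x)).const_mul lam).mul hGc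
      have h3 : HasDerivAt (fun y : ℝ => lam * F (-1/y) + lam * y * G (-1/y)) _ x :=
        h1.add h2
      convert h3 using 1
      field_simp
      ring
    rw [hH'neg x hx]
    apply hmain.congr_of_eventuallyEq
    filter_upwards [Iio_mem_nhds hx] with y hy
    exact hHneg' y hy
  -- H has derivative H' on positives
  have hHd_pos : ∀ x : ℝ, 0 < x → HasDerivAt H (H' x) x := by
    intro x hx
    have hmain : HasDerivAt (fun y : ℝ => lam * (1 + y * mbar)) (lam * mbar) x := by
      have h := (((hasDerivAt_id x).mul_const mbar).const_add 1).const_mul lam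
      simpa using h
    rw [hH'nonneg x hx.le]
    apply hmain.congr_of_eventuallyEq
    filter_upwards [Ioi_mem_nhds hx] with y hy
    exact hHpos y hy.le
  -- H' has derivative H'' on negatives
  have hH'd_neg : ∀ x < (0:ℝ), HasDerivAt H' (H'' x) x := by
    intro x hx
    have hx0 : x ≠ 0 := ne_of_lt hx
    have hu := hu_deriv x hx0
    have hGc : HasDerivAt (fun y : ℝ => lam * G (-1/y))
        (lam * ((-1/x) * f (-1/x) * (x^2)⁻¹)) x :=
      ((hG_deriv (-1/x)).comp x hu).const_mul lam
    have heq : lam * ((-1/x) * f (-1/x) * (x^2)⁻¹) = H'' x := by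
      rw [hH''neg x hx]
      field_simp
    rw [← heq]
    apply hGc.congr_of_eventuallyEq
    filter_upwards [Iio_mem_nhds hx] with y hy
    exact hH'neg y hy
  -- H' has derivative H'' on positives
  have hH'd_pos : ∀ x : ℝ, 0 < x → HasDerivAt H' (H'' x) x := by
    intro x hx
    rw [hH''nonneg x hx.le]
    apply (hasDerivAt_const x (lam * mbar)).congr_of_eventuallyEq
    filter_upwards [Ioi_mem_nhds hx] with y hy
    exact hH'nonneg y hy.le
  -- continuity of H' at 0
  have hH'0 : H' 0 = lam * mbar := hH'nonneg 0 le_rfl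
  have hH'_cont0 : ContinuousAt H' 0 := by
    rw [ContinuousAt, hH'0]
    have hsplit : Tendsto H' (nhdsWithin 0 (Set.Iio 0) ⊔ nhdsWithin 0 (Set.Ici 0))
        (nhds (lam * mbar)) := by
      rw [tendsto_sup]
      constructor
      · have h := (hG_lim.comp hb_lim).const_mul lam
        apply h.congr'
        filter_upwards [self_mem_nhdsWithin] with y hy
        exact (hH'neg y hy).symm
      · apply Tendsto.congr' _ tendsto_const_nhds
        filter_upwards [self_mem_nhdsWithin] with y hy
        exact (hH'nonneg y hy).symm
    rwa [nhdsLT_sup_nhdsGE] at hsplit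
  -- continuity of H'' at 0, and the left limit
  have hH''_left : Tendsto H'' (nhdsWithin 0 (Set.Iio 0)) (nhds 0) := by
    have h := (hf_tail.comp hb_lim).const_mul lam
    rw [mul_zero] at h
    apply h.congr'
    filter_upwards [self_mem_nhdsWithin] with y hy
    have hy0 : y ≠ 0 := ne_of_lt hy
    rw [hH''neg y hy]
    show lam * ((-1/y)^3 * f (-1/y)) = -lam * (y^3)⁻¹ * f (-1/y)
    field_simp
  have hH''_cont0 : ContinuousAt H'' 0 := by
    rw [ContinuousAt]
    have h0 : H'' 0 = 0 := hH''nonneg 0 le_rfl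
    rw [h0]
    have hsplit : Tendsto H'' (nhdsWithin 0 (Set.Iio 0) ⊔ nhdsWithin 0 (Set.Ici 0))
        (nhds (0:ℝ)) := by
      rw [tendsto_sup]
      refine ⟨hH''_left, ?_⟩
      apply Tendsto.congr' _ tendsto_const_nhds
      filter_upwards [self_mem_nhdsWithin] with y hy
      exact (hH''nonneg y hy).symm
    rwa [nhdsLT_sup_nhdsGE] at hsplit
  -- continuity of H at 0
  have hH_cont0 : ContinuousAt H 0 := by
    rw [ContinuousAt]
    have h0 : H 0 = lam := by rw [hHpos 0 le_rfl]; ring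
    rw [h0]
    have hsplit : Tendsto H (nhdsWithin 0 (Set.Iio 0) ⊔ nhdsWithin 0 (Set.Ici 0))
        (nhds lam) := by
      rw [tendsto_sup]
      constructor
      · have hid : Tendsto (fun y : ℝ => y) (nhdsWithin (0:ℝ) (Set.Iio 0)) (nhds 0) :=
          tendsto_id.mono_left nhdsWithin_le_nhds
        have h1 : Tendsto (fun y : ℝ => lam * F (-1/y) + lam * y * G (-1/y))
            (nhdsWithin (0:ℝ) (Set.Iio 0)) (nhds (lam * 1 + lam * 0 * mbar)) :=
          ((hF_lim.comp hb_lim).const_mul lam).add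
            (((hid.const_mul lam).mul (hG_lim.comp hb_lim)))
        have h1' : Tendsto (fun y : ℝ => lam * F (-1/y) + lam * y * G (-1/y))
            (nhdsWithin (0:ℝ) (Set.Iio 0)) (nhds lam) := by
          simpa using h1
        apply h1'.congr'
        filter_upwards [self_mem_nhdsWithin] with y hy
        exact (hHneg' y hy).symm
      · have h2 : Tendsto (fun y : ℝ => lam * (1 + y * mbar))
            (nhdsWithin (0:ℝ) (Set.Ici 0)) (nhds lam) := by
          have : Tendsto (fun y : ℝ => lam * (1 + y * mbar)) (nhds 0)
              (nhds (lam * (1 + 0 * mbar))) :=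
            (continuous_const.mul (continuous_const.add
              (continuous_id.mul continuous_const))).tendsto 0
          simpa using this.mono_left nhdsWithin_le_nhds
        apply h2.congr'
        filter_upwards [self_mem_nhdsWithin] with y hy
        exact (hHpos y hy).symm
    rwa [nhdsLT_sup_nhdsGE] at hsplit
  -- derivative of H everywhere
  have hHd : ∀ x : ℝ, HasDerivAt H (H' x) x := by
    intro x
    rcases lt_trichotomy x 0 with hx | hx | hx
    · exact hHd_neg x hx
    · subst hx
      exact hasDerivAt_of_hasDerivAt_of_ne
        (fun y hy => (lt_or_gt_of_ne hy).elim (hHd_neg y) (hHd_pos y))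
        hH_cont0 hH'_cont0
    · exact hHd_pos x hx
  -- continuity of H'
  have hH'_cont : Continuous H' := by
    rw [continuous_iff_continuousAt]
    intro x
    rcases lt_trichotomy x 0 with hx | hx | hx
    · exact (hH'd_neg x hx).continuousAt
    · exact hx ▸ hH'_cont0
    · exact (hH'd_pos x hx).continuousAt
  -- continuity of H''
  have hH''_cont : Continuous H'' := by
    rw [continuous_iff_continuousAt]
    intro x
    rcases lt_trichotomy x 0 with hx | hx | hx
    · have hx0 : x ≠ 0 := ne_of_lt hx
      have hcand : ContinuousAt (fun y : ℝ => -lam * (y^3)⁻¹ * f (-1/y)) x := by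
        apply ContinuousAt.mul
        · exact continuousAt_const.mul (ContinuousAt.inv₀
            ((continuous_pow 3).continuousAt) (pow_ne_zero 3 hx0))
        · exact hf_cont.continuousAt.comp
            (ContinuousAt.div continuousAt_const continuousAt_id hx0)
      apply hcand.congr
      filter_upwards [Iio_mem_nhds hx] with y hy
      exact (hH''neg y hy).symm
    · exact hx ▸ hH''_cont0
    · apply continuousAt_const.congr
      filter_upwards [Ioi_mem_nhds hx] with y hy
      exact (hH''nonneg y hy.le).symm
  -- derivative of H' everywhere
  have hH'd : ∀ x : ℝ, HasDerivAt H' (H'' x) x := by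
    intro x
    rcases lt_trichotomy x 0 with hx | hx | hx
    · exact hH'd_neg x hx
    · subst hx
      exact hasDerivAt_of_hasDerivAt_of_ne
        (fun y hy => (lt_or_gt_of_ne hy).elim (hH'd_neg y) (hH'd_pos y))
        hH'_cont0 hH''_cont0
    · exact hH'd_pos x hx
  exact ⟨H', H'', hH'_cont, hH''_cont, hHd, hH'd,
    fun x hx => hH''neg x hx, hH''nonneg, hH''_left⟩
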